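/- Adding independent Laplace noise Lap(0, Δ/ε) to each of k counts, where the vector of counts has ℓ¹ global sensitivity at most Δ (i.e., the sum over coordinates of the absolute coordinate differences between neighboring datasets is at most Δ), yields an ε-differentially private mechanism. -/

import Mathlib

open MeasureTheory
open scoped ENNReal NNReal

/-- The centered Laplace distribution `Lap(0, b)` with scale `b`. -/
noncomputable def laplaceMeasure (b : ℝ) : Measure ℝ :=
  volume.withDensity (fun z => ENNReal.ofReal ((1 / (2 * b)) * Real.exp (-|z| / b)))

instance laplaceMeasure.sigmaFinite (b : ℝ) : SigmaFinite (laplaceMeasure b) := by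
  unfold laplaceMeasure; infer_instance

lemma laplace_density_measurable (b : ℝ) :
    Measurable (fun z : ℝ => ENNReal.ofReal ((1 / (2 * b)) * Real.exp (-|z| / b))) := by
  measurability

/-- Shifting the Laplace measure by `a` multiplies it by at most `exp (|a| / b)`. -/
lemma laplace_shift_le {b : ℝ} (hb : 0 < b) (a : ℝ) :
    (laplaceMeasure b).map (fun z => a + z) ≤
      ENNReal.ofReal (Real.exp (|a| / b)) • laplaceMeasure b := by
  set g : ℝ → ℝ≥0∞ := fun z => ENNReal.ofReal ((1 / (2 * b)) * Real.exp (-|z| / b)) with hgdef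
  have hg : Measurable g := laplace_density_measurable b
  rw [Measure.le_iff]
  intro s hs
  have hpre : MeasurableSet ((fun z : ℝ => a + z) ⁻¹' s) := measurable_const_add a hs
  rw [Measure.map_apply (measurable_const_add a) hs, Measure.smul_apply, smul_eq_mul]
  show (volume.withDensity g) _ ≤ _ * (volume.withDensity g) s
  rw [withDensity_apply _ hpre, withDensity_apply _ hs]
  have hvol : (volume : Measure ℝ).map (fun z => a + z) = volume :=
    map_add_left_eq_self volume a
  have hsub : Measurable (fun y : ℝ => g (y - a)) := hg.comp (measurable_id.sub measurable_const)
  have key : ∫⁻ z in (fun z : ℝ => a + z) ⁻¹' s, g z ∂volume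
      = ∫⁻ y in s, g (y - a) ∂volume := by
    conv_rhs => rw [← hvol]
    rw [setLIntegral_map hs hsub (measurable_const_add a)]
    simp
  rw [key]
  have hpt : ∀ y : ℝ, g (y - a) ≤ ENNReal.ofReal (Real.exp (|a| / b)) * g y := by
    intro y
    rw [hgdef]
    simp only
    rw [← ENNReal.ofReal_mul (Real.exp_nonneg _)]
    apply ENNReal.ofReal_le_ofReal
    have h1 : Real.exp (-|y - a| / b) ≤ Real.exp (|a| / b) * Real.exp (-|y| / b) := by
      rw [← Real.exp_add]
      apply Real.exp_le_exp.mpr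
      rw [← add_div]
      gcongr
      have := abs_sub_abs_le_abs_sub y a
      linarith
    calc (1 / (2 * b)) * Real.exp (-|y - a| / b)
        ≤ (1 / (2 * b)) * (Real.exp (|a| / b) * Real.exp (-|y| / b)) := by
          apply mul_le_mul_of_nonneg_left h1 (by positivity)
      _ = Real.exp (|a| / b) * ((1 / (2 * b)) * Real.exp (-|y| / b)) := by ring
  calc ∫⁻ y in s, g (y - a) ∂volume
      ≤ ∫⁻ y in s, ENNReal.ofReal (Real.exp (|a| / b)) * g y ∂volume :=
        lintegral_mono fun y => hpt y
    _ = ENNReal.ofReal (Real.exp (|a| / b)) * ∫⁻ y in s, g y ∂volume :=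
        lintegral_const_mul _ hg

/-- Monotonicity of `Measure.pi` in each coordinate measure. -/
lemma Measure.pi_mono' {ι : Type*} [Fintype ι] {α : ι → Type*} [∀ i, MeasurableSpace (α i)]
    {μ ν : ∀ i, Measure (α i)} (h : ∀ i, μ i ≤ ν i) : Measure.pi μ ≤ Measure.pi ν := by
  have hOM : (OuterMeasure.pi fun i => (μ i).toOuterMeasure)
      ≤ (OuterMeasure.pi fun i => (ν i).toOuterMeasure) := by
    rw [OuterMeasure.le_pi]
    intro s _
    refine (OuterMeasure.pi_pi_le _ s).trans ?_
    exact Finset.prod_le_prod' fun i _ => Measure.le_iff'.1 (h i) (s i)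
  rw [Measure.le_iff]
  intro s hs
  rw [Measure.pi_def, toMeasure_apply _ _ hs, Measure.pi_def,
    toMeasure_apply _ _ hs]
  exact hOM s

/-- `Measure.pi` of coordinatewise scaled measures. -/
lemma Measure.pi_smul' {ι : Type*} [Fintype ι] {α : ι → Type*} [∀ i, MeasurableSpace (α i)]
    (c : ι → ℝ≥0∞) (hc : ∀ i, c i ≠ ⊤) (ν : ∀ i, Measure (α i)) [∀ i, SigmaFinite (ν i)] :
    Measure.pi (fun i => c i • ν i) = (∏ i, c i) • Measure.pi ν := by
  haveI : ∀ i, SigmaFinite (c i • ν i) := fun i => by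
    rw [← ENNReal.coe_toNNReal (hc i), ← ENNReal.smul_def]
    infer_instance
  refine Measure.pi_eq fun s hs => ?_
  simp [Measure.smul_apply, Measure.pi_pi, smul_eq_mul, Finset.prod_mul_distrib]

/-- Adding i.i.d. `Lap(0, Δ/ε)` noise to each coordinate of a `k`-dimensional count
query with ℓ¹ global sensitivity `Δ` gives an `ε`-differentially private mechanism. -/
theorem laplace_vector_mechanism_dp {X : Type*} {k : ℕ}
    (neighbor : X → X → Prop) (f : X → (Fin k → ℝ)) (Δ ε : ℝ)
    (hΔ : 0 < Δ) (hε : 0 < ε)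
    (hsens : ∀ D D', neighbor D D' → ∑ i, |f D i - f D' i| ≤ Δ)
    (M : X → Measure (Fin k → ℝ))
    (hM : ∀ D, M D = (Measure.pi (fun _ : Fin k => laplaceMeasure (Δ / ε))).map
      (fun z i => f D i + z i)) :
    ∀ D D', neighbor D D' → ∀ S : Set (Fin k → ℝ), MeasurableSet S →
      M D S ≤ ENNReal.ofReal (Real.exp ε) * M D' S := by
  intro D D' hDD' S hS
  set b : ℝ := Δ / ε with hbdef
  have hb : 0 < b := div_pos hΔ hε
  -- coordinate measures after shifting
  set ν : X → Fin k → Measure ℝ := fun E i => (laplaceMeasure b).map (fun z => f E i + z)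
    with hνdef
  haveI hSF : ∀ (E : X) (i : Fin k), SigmaFinite (ν E i) := by
    intro E i
    have h1 : SigmaFinite ((laplaceMeasure b).map (MeasurableEquiv.addLeft (f E i))) :=
      MeasurableEquiv.sigmaFinite_map _
    simpa [hνdef, MeasurableEquiv.coe_addLeft, HAdd.hAdd] using h1
  have hMpi : ∀ E : X, M E = Measure.pi (ν E) := by
    intro E
    rw [hM E]
    exact (measurePreserving_pi (fun _ : Fin k => laplaceMeasure b) (ν E)
      (fun i => ⟨measurable_const_add _, rfl⟩)).map_eq
  set c : Fin k → ℝ := fun i => f D i - f D' i with hcdef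
  have step1 : ∀ i, ν D i ≤ (ENNReal.ofReal (Real.exp (|c i| / b))) • ν D' i := by
    intro i
    have hcomp : ν D i = ((laplaceMeasure b).map (fun z => c i + z)).map
        (fun z => f D' i + z) := by
      rw [hνdef]
      simp only
      rw [Measure.map_map (measurable_const_add _) (measurable_const_add _)]
      congr 1
      funext z
      simp [hcdef, Function.comp]
      ring
    rw [hcomp]
    calc ((laplaceMeasure b).map (fun z => c i + z)).map (fun z => f D' i + z)
        ≤ (ENNReal.ofReal (Real.exp (|c i| / b)) • laplaceMeasure b).map
            (fun z => f D' i + z) :=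
          Measure.map_mono (laplace_shift_le hb (c i)) (measurable_const_add _)
      _ = ENNReal.ofReal (Real.exp (|c i| / b)) • ν D' i := by
          rw [Measure.map_smul, hνdef]
  have hle : (∏ i, ENNReal.ofReal (Real.exp (|c i| / b))) ≤ ENNReal.ofReal (Real.exp ε) := by
    rw [← ENNReal.ofReal_prod_of_nonneg (fun i _ => Real.exp_nonneg _), ← Real.exp_sum]
    apply ENNReal.ofReal_le_ofReal
    apply Real.exp_le_exp.mpr
    rw [← Finset.sum_div, div_le_iff₀ hb]
    calc ∑ i, |c i| ≤ Δ := hsens D D' hDD'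
      _ = ε * b := by rw [hbdef]; field_simp
  calc M D S = Measure.pi (ν D) S := by rw [hMpi D]
    _ ≤ Measure.pi (fun i => ENNReal.ofReal (Real.exp (|c i| / b)) • ν D' i) S :=
        Measure.le_iff'.1 (Measure.pi_mono' step1) S
    _ = (∏ i, ENNReal.ofReal (Real.exp (|c i| / b))) • Measure.pi (ν D') S := by
        rw [Measure.pi_smul' _ (fun i => ENNReal.ofReal_ne_top) (ν D'), Measure.smul_apply]
    _ ≤ ENNReal.ofReal (Real.exp ε) * M D' S := by
        rw [hMpi D', smul_eq_mul]
        exact mul_le_mul_left hle _
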